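/- Let ζ > 0, r > 0, t ≥ 0 and let w : [t−r, t] → ℝ be continuous. Then |∫₀¹ ∫_{t−rl}^{t} exp(−ζ(t−s))·w(s) ds dl| ≤ ((1−exp(−ζr))/ζ)^{1/2} · ( ∫_{t−r}^{t} exp(−ζ(t−s))·w(s)² ds )^{1/2}. -/

import Mathlib

open Real Set MeasureTheory intervalIntegral

lemma exp_integral_eval (ζ t a : ℝ) (hζ : 0 < ζ) :
    ∫ s in a..t, Real.exp (-ζ * (t - s)) =
      (1 - Real.exp (-ζ * (t - a))) / ζ := by
  have h : ∀ x ∈ uIcc a t, HasDerivAt (fun s => Real.exp (-ζ * (t - s)) / ζ)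
      (Real.exp (-ζ * (t - x))) x := by
    intro x _
    have h1 : HasDerivAt (fun s : ℝ => -ζ * (t - s)) ζ x := by
      have := ((hasDerivAt_id x).const_sub t).const_mul (-ζ)
      simpa using this
    have h2 := (h1.exp).div_const ζ
    simpa [mul_div_assoc, mul_div_cancel_left₀, hζ.ne'] using h2
  have hint : IntervalIntegrable (fun s => Real.exp (-ζ * (t - s))) volume a t :=
    (Continuous.intervalIntegrable (by continuity) a t)
  rw [intervalIntegral.integral_eq_sub_of_hasDerivAt h hint]
  simp [sub_div]

/-- Double-integral Cauchy–Schwarz bound from the proof of Theorem 3.3. -/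
theorem stmt4 (ζ r t : ℝ) (hζ : 0 < ζ) (hr : 0 < r) (ht : 0 ≤ t)
    (w : ℝ → ℝ) (hw : ContinuousOn w (Icc (t - r) t)) :
    |∫ l in (0:ℝ)..1, ∫ s in (t - r * l)..t, Real.exp (-ζ * (t - s)) * w s| ≤
      Real.sqrt ((1 - Real.exp (-ζ * r)) / ζ) *
        Real.sqrt (∫ s in (t - r)..t, Real.exp (-ζ * (t - s)) * (w s) ^ 2) := by
  set C := Real.sqrt ((1 - Real.exp (-ζ * r)) / ζ) with hC
  set I := ∫ s in (t - r)..t, Real.exp (-ζ * (t - s)) * (w s) ^ 2 with hI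
  have htr : t - r ≤ t := by linarith
  -- integrability of the big integrand on [t-r, t]
  have hcont2 : ContinuousOn (fun s => Real.exp (-ζ * (t - s)) * (w s) ^ 2) (Icc (t - r) t) := by
    exact (Continuous.continuousOn (by continuity)).mul (hw.pow 2)
  have hint2 : IntervalIntegrable (fun s => Real.exp (-ζ * (t - s)) * (w s) ^ 2)
      volume (t - r) t := by
    apply ContinuousOn.intervalIntegrable
    rwa [uIcc_of_le htr]
  -- key per-l bound
  have key : ∀ l ∈ Set.uIoc (0:ℝ) 1,
      ‖∫ s in (t - r * l)..t, Real.exp (-ζ * (t - s)) * w s‖ ≤ C * Real.sqrt I := by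
    intro l hl
    rw [uIoc_of_le (by norm_num : (0:ℝ) ≤ 1)] at hl
    obtain ⟨hl0, hl1⟩ := hl
    set a := t - r * l with ha
    have hat : a ≤ t := by nlinarith
    have hta : t - r ≤ a := by nlinarith
    -- Cauchy-Schwarz on Ioc a t
    set μ := volume.restrict (Ioc a t) with hμ
    haveI : IsFiniteMeasure μ := by
      rw [hμ]
      exact ⟨by rw [Measure.restrict_apply_univ]; exact measure_Ioc_lt_top⟩
    set f : ℝ → ℝ := fun s => Real.exp (-(ζ/2) * (t - s)) with hf
    set g : ℝ → ℝ := fun s => Real.exp (-(ζ/2) * (t - s)) * w s with hg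
    have hfg : ∀ s, Real.exp (-ζ * (t - s)) * w s = f s * g s := by
      intro s
      rw [hf, hg]
      rw [← mul_assoc, ← Real.exp_add]
      ring_nf
    have hfm : AEStronglyMeasurable f μ := (Continuous.aestronglyMeasurable (by continuity))
    have hgm : AEStronglyMeasurable g μ := by
      apply ContinuousOn.aestronglyMeasurable
        ((Continuous.continuousOn (by continuity)).mul ?_) measurableSet_Ioc
      exact hw.mono (fun x hx => ⟨le_trans hta hx.1.le, hx.2⟩)
    -- bounds
    obtain ⟨M, hM⟩ := (isCompact_Icc).exists_bound_of_continuousOn hw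
    have hsub : Ioc a t ⊆ Icc (t - r) t := fun x hx => ⟨le_trans hta hx.1.le, hx.2⟩
    have hfb : MemLp f (ENNReal.ofReal 2) μ := by
      apply MemLp.of_bound hfm 1
      rw [hμ, ae_restrict_iff' measurableSet_Ioc]
      filter_upwards with x hx
      rw [hf, Real.norm_eq_abs, abs_of_nonneg (Real.exp_nonneg _), ← Real.exp_zero]
      apply Real.exp_le_exp.2
      nlinarith [hx.2]
    have hgb : MemLp g (ENNReal.ofReal 2) μ := by
      apply MemLp.of_bound hgm (max M 0)
      rw [hμ, ae_restrict_iff' measurableSet_Ioc]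
      filter_upwards with x hx
      rw [hg, Real.norm_eq_abs, abs_mul, abs_of_nonneg (Real.exp_nonneg _)]
      have h1 : Real.exp (-(ζ/2) * (t - x)) ≤ 1 := by
        rw [← Real.exp_zero]
        apply Real.exp_le_exp.2
        nlinarith [hx.2]
      have h2 : |w x| ≤ M := by
        have := hM x (hsub hx)
        rwa [Real.norm_eq_abs] at this
      calc Real.exp (-(ζ/2) * (t - x)) * |w x| ≤ 1 * M := by
            apply mul_le_mul h1 h2 (abs_nonneg _) zero_le_one
        _ ≤ max M 0 := by simp
    -- Hölder / Cauchy-Schwarz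
    have hpq : Real.HolderConjugate 2 2 := ⟨by norm_num, by norm_num, by norm_num⟩
    have CS := MeasureTheory.integral_mul_norm_le_Lp_mul_Lq hpq hfb hgb
    -- rewrite the three integrals
    have e1 : ∫ s, ‖f s‖ ^ (2:ℝ) ∂μ = ∫ s in Ioc a t, Real.exp (-ζ * (t - s)) := by
      rw [hμ]
      apply setIntegral_congr_fun measurableSet_Ioc
      intro x _
      simp only
      rw [show ((2:ℝ)) = ((2:ℕ):ℝ) by norm_num, Real.rpow_natCast, Real.norm_eq_abs,
        abs_of_nonneg (Real.exp_nonneg _), pow_two, ← Real.exp_add]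
      ring_nf
    have e2 : ∫ s, ‖g s‖ ^ (2:ℝ) ∂μ = ∫ s in Ioc a t, Real.exp (-ζ * (t - s)) * (w s) ^ 2 := by
      rw [hμ]
      apply setIntegral_congr_fun measurableSet_Ioc
      intro x _
      simp only
      rw [show ((2:ℝ)) = ((2:ℕ):ℝ) by norm_num, Real.rpow_natCast, Real.norm_eq_abs,
        abs_mul, abs_of_nonneg (Real.exp_nonneg _), mul_pow, sq_abs,
        pow_two, ← Real.exp_add]
      ring_nf
    -- bound the weight integral
    have hE1 : ∫ s in Ioc a t, Real.exp (-ζ * (t - s)) ≤ (1 - Real.exp (-ζ * r)) / ζ := by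
      rw [← intervalIntegral.integral_of_le hat, exp_integral_eval ζ t a hζ]
      have hle : Real.exp (-ζ * r) ≤ Real.exp (-ζ * (t - a)) := by
        apply Real.exp_le_exp.2
        rw [ha]
        nlinarith
      apply div_le_div_of_nonneg_right (by linarith) hζ.le
    have hE2 : ∫ s in Ioc a t, Real.exp (-ζ * (t - s)) * (w s) ^ 2 ≤ I := by
      rw [← intervalIntegral.integral_of_le hat, hI]
      apply intervalIntegral.integral_mono_interval hta hat le_rfl ?_ hint2
      filter_upwards with x
      positivity
    have hE1nn : 0 ≤ ∫ s in Ioc a t, Real.exp (-ζ * (t - s)) := by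
      apply setIntegral_nonneg measurableSet_Ioc
      intro x _
      positivity
    have hE2nn : 0 ≤ ∫ s in Ioc a t, Real.exp (-ζ * (t - s)) * (w s) ^ 2 := by
      apply setIntegral_nonneg measurableSet_Ioc
      intro x _
      positivity
    -- assemble
    rw [Real.norm_eq_abs, intervalIntegral.integral_of_le hat]
    have habs : |∫ s in Ioc a t, Real.exp (-ζ * (t - s)) * w s ∂volume|
        ≤ ∫ s, ‖f s‖ * ‖g s‖ ∂μ := by
      rw [hμ]
      calc |∫ s in Ioc a t, Real.exp (-ζ * (t - s)) * w s ∂volume|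
          ≤ ∫ s in Ioc a t, ‖Real.exp (-ζ * (t - s)) * w s‖ ∂volume := by
            rw [← Real.norm_eq_abs]
            exact MeasureTheory.norm_integral_le_integral_norm _
        _ = ∫ s in Ioc a t, ‖f s‖ * ‖g s‖ ∂volume := by
            apply setIntegral_congr_fun measurableSet_Ioc
            intro x _
            simp only
            rw [hfg x, norm_mul]
    refine habs.trans (CS.trans ?_)
    rw [e1, e2]
    rw [hC, Real.sqrt_eq_rpow, Real.sqrt_eq_rpow]
    apply mul_le_mul ?_ ?_ ?_ ?_
    · exact Real.rpow_le_rpow hE1nn hE1 (by norm_num)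
    · exact Real.rpow_le_rpow hE2nn hE2 (by norm_num)
    · exact Real.rpow_nonneg hE2nn _
    · exact Real.rpow_nonneg (le_trans hE1nn hE1) _
  have := intervalIntegral.norm_integral_le_of_norm_le_const key
  rw [Real.norm_eq_abs] at this
  simpa using this
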